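/- For every z > 0 one has the two-sided bound: (1/s(z) + 1/|s(-z)|) · |c_Y(z) - c_Y(-z)| + 2 ν({y : |y| ≥ z}) ≥ ν₊(z) + ν₋(z) ≥ |c_Y(z) - c_Y(-z)| / (s(z) + |s(-z)|) + ν({y : |y| ≥ z}). -/

import Mathlib

open MeasureTheory Set Filter
open scoped ENNReal NNReal Classical
open scoped Topology

/-- The function `c_Y` of the paper: `c_Y y = ∫_{[0,∞)} min(s(y),s(w)) ν(dw)` for `y ≥ 0`,
`c_Y y = ∫_{(-∞,0)} min(|s(y)|,|s(w)|) ν(dw)` for `y < 0`. -/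
noncomputable def cY (s : ℝ → ℝ) (ν : Measure ℝ) (y : ℝ) : ℝ :=
  if 0 ≤ y then ∫ w in Ici (0 : ℝ), min (s y) (s w) ∂ν
  else ∫ w in Iio (0 : ℝ), min |s y| |s w| ∂ν

/-- The slope `(c_Y(z) - c_Y(-y))/(s(z) - s(-y))` in the definition of `ζ₊, ρ₊`. -/
noncomputable def slopeYPlus (s : ℝ → ℝ) (ν : Measure ℝ) (z y : ℝ) : ℝ :=
  (cY s ν z - cY s ν (-y)) / (s z - s (-y))

/-- The slope `(c_Y(y) - c_Y(-z))/(s(y) - s(-z))` in the definition of `ζ₋, ρ₋`. -/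
noncomputable def slopeYMinus (s : ℝ → ℝ) (ν : Measure ℝ) (z y : ℝ) : ℝ :=
  (cY s ν y - cY s ν (-z)) / (s y - s (-z))

/-- The set of `y > 0` attaining the infimum in the definition of `ρ₊(z)`. -/
def argYPlus (s : ℝ → ℝ) (ν : Measure ℝ) (z : ℝ) : Set ℝ :=
  {y | 0 < y ∧ ∀ x, 0 < x → slopeYPlus s ν z y ≤ slopeYPlus s ν z x}

/-- The set of `y > 0` attaining the supremum in the definition of `ρ₋(z)`. -/
def argYMinus (s : ℝ → ℝ) (ν : Measure ℝ) (z : ℝ) : Set ℝ :=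
  {y | 0 < y ∧ ∀ x, 0 < x → slopeYMinus s ν z x ≤ slopeYMinus s ν z y}

/-- `ζ₊(z) = -inf_{y>0} (c_Y(z)-c_Y(-y))/(s(z)-s(-y))` if attained, `0` otherwise. -/
noncomputable def zetaPlus (s : ℝ → ℝ) (ν : Measure ℝ) (z : ℝ) : ℝ :=
  if (argYPlus s ν z).Nonempty then -sInf (slopeYPlus s ν z '' Ioi 0) else 0

/-- `ζ₋(z) = sup_{y>0} (c_Y(y)-c_Y(-z))/(s(y)-s(-z))` if attained, `0` otherwise. -/
noncomputable def zetaMinus (s : ℝ → ℝ) (ν : Measure ℝ) (z : ℝ) : ℝ :=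
  if (argYMinus s ν z).Nonempty then sSup (slopeYMinus s ν z '' Ioi 0) else 0

/-- `ν₊(z) = ζ₊(z) + ν([z,∞))`, the tail distribution function of the supremum of the
stopped process for the optimal embedding. -/
noncomputable def nuPlus (s : ℝ → ℝ) (ν : Measure ℝ) (z : ℝ) : ℝ :=
  zetaPlus s ν z + (ν (Ici z)).toReal

/-- `ν₋(z) = ν((-∞,-z]) + ζ₋(z)`, the tail distribution function of minus the infimum of
the stopped process for the optimal embedding. -/
noncomputable def nuMinus (s : ℝ → ℝ) (ν : Measure ℝ) (z : ℝ) : ℝ :=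
  (ν (Iic (-z))).toReal + zetaMinus s ν z

namespace NuAux

lemma min_lip (a b c : ℝ) : |min a c - min b c| ≤ |a - b| := by
  rcases le_total a c with h1 | h1 <;> rcases le_total b c with h2 | h2
  · rw [min_eq_left h1, min_eq_left h2]
  · rw [min_eq_left h1, min_eq_right h2,
      abs_of_nonpos (by linarith : a - c ≤ 0), abs_of_nonpos (by linarith : a - b ≤ 0)]
    linarith
  · rw [min_eq_right h1, min_eq_left h2,
      abs_of_nonneg (by linarith : c - b ≥ 0), abs_of_nonneg (by linarith : a - b ≥ 0)]
    linarith
  · rw [min_eq_right h1, min_eq_right h2]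
    simp [abs_nonneg]

variable (φ : ℝ → ℝ) (μ : Measure ℝ)

/-- `Hf u = ∫_{(0,∞)} min(u, φ v) dμ(v)`. -/
noncomputable def Hf (u : ℝ) : ℝ := ∫ v in Ioi (0:ℝ), min u (φ v) ∂μ

/-- The generic slope function. -/
noncomputable def gS (c T y : ℝ) : ℝ := (Hf φ μ (φ y) - c) / (φ y + T)

variable {φ μ}
variable [IsFiniteMeasure μ]

lemma phi_pos (hφm : StrictMono φ) (hφ0 : φ 0 = 0) {y : ℝ} (hy : 0 < y) : 0 < φ y := by
  rw [← hφ0]; exact hφm hy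

lemma integrable_min (hφc : Continuous φ) (u : ℝ) {E : Set ℝ} (hE : MeasurableSet E)
    (hEpos : ∀ v ∈ E, 0 ≤ φ v) :
    Integrable (fun v => min u (φ v)) (μ.restrict E) := by
  refine Integrable.mono' (integrable_const |u|)
    ((continuous_const.min hφc).aestronglyMeasurable) ?_
  refine (ae_restrict_iff' hE).2 (ae_of_all _ fun v hv => ?_)
  have h0 : 0 ≤ φ v := hEpos v hv
  rw [Real.norm_eq_abs, abs_le]
  refine ⟨?_, (min_le_left _ _).trans (le_abs_self u)⟩
  have h1 : min u 0 ≤ min u (φ v) := min_le_min le_rfl h0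
  rcases le_total u 0 with h | h
  · rw [min_eq_left h] at h1; linarith [neg_abs_le u]
  · rw [min_eq_right h] at h1; linarith [abs_nonneg u]

lemma mass_le (hμ : μ univ ≤ 1) (E : Set ℝ) : (μ E).toReal ≤ 1 := by
  have h : μ E ≤ 1 := (measure_mono (subset_univ E)).trans hμ
  have h2 := ENNReal.toReal_mono (a := μ E) (b := 1) (by simp) h
  simpa using h2

lemma Hf_nonneg (hφm : StrictMono φ) (hφ0 : φ 0 = 0) {u : ℝ} (hu : 0 ≤ u) :
    0 ≤ Hf φ μ u :=
  setIntegral_nonneg measurableSet_Ioi fun v hv => le_min hu (phi_pos hφm hφ0 hv).le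

lemma Hf_mono (hφc : Continuous φ) (hφm : StrictMono φ) (hφ0 : φ 0 = 0)
    {u u' : ℝ} (h : u ≤ u') : Hf φ μ u ≤ Hf φ μ u' := by
  have hpos : ∀ v ∈ Ioi (0:ℝ), 0 ≤ φ v := fun v hv => (phi_pos hφm hφ0 hv).le
  exact setIntegral_mono_on (integrable_min hφc u measurableSet_Ioi hpos)
    (integrable_min hφc u' measurableSet_Ioi hpos) measurableSet_Ioi
    (fun v _ => min_le_min h le_rfl)

lemma Hf_le (hφc : Continuous φ) (hφm : StrictMono φ) (hφ0 : φ 0 = 0)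
    (hμ : μ univ ≤ 1) {u : ℝ} (hu : 0 ≤ u) : Hf φ μ u ≤ u := by
  have hpos : ∀ v ∈ Ioi (0:ℝ), 0 ≤ φ v := fun v hv => (phi_pos hφm hφ0 hv).le
  have h1 : Hf φ μ u ≤ ∫ _ in Ioi (0:ℝ), u ∂μ :=
    setIntegral_mono_on (integrable_min hφc u measurableSet_Ioi hpos)
      (integrable_const u) measurableSet_Ioi (fun v _ => min_le_left _ _)
  rw [setIntegral_const, smul_eq_mul, measureReal_def] at h1
  have h2 : (μ (Ioi (0:ℝ))).toReal ≤ 1 := mass_le hμ _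
  nlinarith [ENNReal.toReal_nonneg (a := μ (Ioi (0:ℝ)))]

lemma Hf_lip_ub (hφc : Continuous φ) (hφm : StrictMono φ) (hφ0 : φ 0 = 0)
    {u u' : ℝ} (h : u ≤ u') :
    Hf φ μ u' ≤ Hf φ μ u + (u' - u) * (μ ({v : ℝ | u < φ v} ∩ Ioi 0)).toReal := by
  have hA : MeasurableSet {v : ℝ | u < φ v} := measurableSet_lt measurable_const hφc.measurable
  have hpos : ∀ v ∈ Ioi (0:ℝ), 0 ≤ φ v := fun v hv => (phi_pos hφm hφ0 hv).le
  have hint1 := integrable_min (μ := μ) hφc u measurableSet_Ioi hpos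
  have hind : Integrable (fun v => Set.indicator {v : ℝ | u < φ v} (fun _ => u' - u) v)
      (μ.restrict (Ioi 0)) := (integrable_const (u' - u)).indicator hA
  have hle : ∀ v ∈ Ioi (0:ℝ), min u' (φ v) ≤
      min u (φ v) + Set.indicator {v : ℝ | u < φ v} (fun _ => u' - u) v := by
    intro v _
    by_cases hcv : u < φ v
    · rw [Set.indicator_of_mem (by exact hcv), min_eq_left hcv.le]
      have := min_le_left u' (φ v)
      linarith
    · push_neg at hcv
      rw [Set.indicator_of_notMem (by exact not_lt.mpr hcv), min_eq_right hcv,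
        min_eq_right (hcv.trans h)]
      linarith
  calc Hf φ μ u' ≤ ∫ v in Ioi (0:ℝ),
        (min u (φ v) + Set.indicator {v : ℝ | u < φ v} (fun _ => u' - u) v) ∂μ :=
        setIntegral_mono_on (integrable_min hφc u' measurableSet_Ioi hpos)
          (hint1.add hind) measurableSet_Ioi hle
    _ = Hf φ μ u + ∫ v in Ioi (0:ℝ),
        Set.indicator {v : ℝ | u < φ v} (fun _ => u' - u) v ∂μ := integral_add hint1 hind
    _ = Hf φ μ u + (u' - u) * (μ ({v : ℝ | u < φ v} ∩ Ioi 0)).toReal := by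
        rw [integral_indicator hA, setIntegral_const, measureReal_restrict_apply hA, smul_eq_mul, measureReal_def]
        ring

lemma Hf_lipschitz (hφc : Continuous φ) (hφm : StrictMono φ) (hφ0 : φ 0 = 0)
    (hμ : μ univ ≤ 1) : LipschitzWith 1 (Hf φ μ) := by
  apply LipschitzWith.of_dist_le_mul
  intro u u'
  rw [Real.dist_eq, Real.dist_eq, NNReal.coe_one, one_mul]
  have hpos : ∀ v ∈ Ioi (0:ℝ), 0 ≤ φ v := fun v hv => (phi_pos hφm hφ0 hv).le
  have h1 := integrable_min (μ := μ) hφc u measurableSet_Ioi hpos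
  have h2 := integrable_min (μ := μ) hφc u' measurableSet_Ioi hpos
  have key : |Hf φ μ u - Hf φ μ u'| ≤ ∫ v in Ioi (0:ℝ), |min u (φ v) - min u' (φ v)| ∂μ := by
    rw [Hf, Hf, ← integral_sub h1 h2]
    simpa [Real.norm_eq_abs] using
      norm_integral_le_integral_norm (μ := μ.restrict (Ioi 0))
        (f := fun v => min u (φ v) - min u' (φ v))
  have key2 : (∫ v in Ioi (0:ℝ), |min u (φ v) - min u' (φ v)| ∂μ) ≤
      ∫ _ in Ioi (0:ℝ), |u - u'| ∂μ :=
    setIntegral_mono_on (h1.sub h2).abs (integrable_const _) measurableSet_Ioi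
      (fun v _ => min_lip u u' (φ v))
  rw [setIntegral_const, smul_eq_mul, measureReal_def] at key2
  have h3 : (μ (Ioi (0:ℝ))).toReal ≤ 1 := mass_le hμ _
  nlinarith [abs_nonneg (u - u'), ENNReal.toReal_nonneg (a := μ (Ioi (0:ℝ)))]

lemma gS_max_nonneg (hφc : Continuous φ) (hφm : StrictMono φ) (hφ0 : φ 0 = 0)
    {c T : ℝ} (hT : 0 < T) {ρ : ℝ} (hρ : 0 < ρ)
    (hmax : ∀ x, 0 < x → gS φ μ c T x ≤ gS φ μ c T ρ) : 0 ≤ gS φ μ c T ρ := by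
  by_contra hneg
  push_neg at hneg
  have hu : 0 < φ ρ := phi_pos hφm hφ0 hρ
  have hd : 0 < φ ρ + T := by linarith
  have hN : Hf φ μ (φ ρ) - c < 0 := by
    by_contra hN
    push_neg at hN
    exact absurd (div_nonneg hN hd.le) (not_le.mpr hneg)
  have hu' : φ ρ < φ (ρ + 1) := hφm (lt_add_one ρ)
  have hd' : 0 < φ (ρ + 1) + T := by linarith
  have hH : Hf φ μ (φ ρ) ≤ Hf φ μ (φ (ρ + 1)) := Hf_mono hφc hφm hφ0 hu'.le
  have hle := hmax (ρ + 1) (by linarith)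
  rcases le_or_gt 0 (Hf φ μ (φ (ρ + 1)) - c) with hcase | hcase
  · have h0 : (0:ℝ) ≤ gS φ μ c T (ρ + 1) := div_nonneg hcase hd'.le
    have hx : gS φ μ c T ρ < 0 := hneg
    linarith
  · have h1 : (Hf φ μ (φ ρ) - c) / (φ ρ + T) < (Hf φ μ (φ ρ) - c) / (φ (ρ + 1) + T) := by
      rw [div_lt_div_iff₀ hd hd']
      nlinarith
    have h2 : (Hf φ μ (φ ρ) - c) / (φ (ρ + 1) + T) ≤
        (Hf φ μ (φ (ρ + 1)) - c) / (φ (ρ + 1) + T) := by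
      rw [div_le_div_iff₀ hd' hd']
      nlinarith
    have hgρ : gS φ μ c T ρ = (Hf φ μ (φ ρ) - c) / (φ ρ + T) := rfl
    have hgρ' : gS φ μ c T (ρ + 1) = (Hf φ μ (φ (ρ + 1)) - c) / (φ (ρ + 1) + T) := rfl
    rw [hgρ, hgρ'] at hle
    linarith

lemma gS_max_le (hφc : Continuous φ) (hφm : StrictMono φ) (hφ0 : φ 0 = 0)
    {c T : ℝ} (hT : 0 < T) {z ρ : ℝ} (hz : 0 < z) (hρ : 0 < ρ)
    (hmax : ∀ x, 0 < x → gS φ μ c T x ≤ gS φ μ c T ρ) :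
    gS φ μ c T ρ ≤ (μ (Ioi z)).toReal + |Hf φ μ (φ z) - c| / T := by
  have hupos : 0 < φ ρ := phi_pos hφm hφ0 hρ
  have hu0pos : 0 < φ z := phi_pos hφm hφ0 hz
  have hd : 0 < φ ρ + T := by linarith
  have hm0 : (0:ℝ) ≤ (μ (Ioi z)).toReal := ENNReal.toReal_nonneg
  have habs : Hf φ μ (φ z) - c ≤ |Hf φ μ (φ z) - c| := le_abs_self _
  have habs0 : (0:ℝ) ≤ |Hf φ μ (φ z) - c| := abs_nonneg _
  have hdivT : |Hf φ μ (φ z) - c| / (φ ρ + T) ≤ |Hf φ μ (φ z) - c| / T :=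
    div_le_div_of_nonneg_left habs0 hT (by linarith)
  have hgρ : gS φ μ c T ρ = (Hf φ μ (φ ρ) - c) / (φ ρ + T) := rfl
  rcases le_or_gt (φ ρ) (φ z) with hcase | hcase
  · have h1 : (Hf φ μ (φ ρ) - c) / (φ ρ + T) ≤ |Hf φ μ (φ z) - c| / (φ ρ + T) := by
      rw [div_le_div_iff₀ hd hd]
      have := Hf_mono (μ := μ) hφc hφm hφ0 hcase
      nlinarith
    rw [hgρ]
    linarith
  · have hset : {v : ℝ | φ z < φ v} ∩ Ioi 0 = Ioi z := by
      ext v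
      simp only [mem_inter_iff, mem_setOf_eq, mem_Ioi]
      constructor
      · rintro ⟨h1, _⟩
        exact hφm.lt_iff_lt.mp h1
      · intro h1
        exact ⟨hφm h1, hz.trans h1⟩
    have hkey : Hf φ μ (φ ρ) ≤ Hf φ μ (φ z) + (φ ρ - φ z) * (μ (Ioi z)).toReal := by
      have := Hf_lip_ub (μ := μ) hφc hφm hφ0 hcase.le
      rwa [hset] at this
    have h2 : (Hf φ μ (φ ρ) - c) / (φ ρ + T) ≤
        (|Hf φ μ (φ z) - c| + (φ ρ - φ z) * (μ (Ioi z)).toReal) / (φ ρ + T) := by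
      rw [div_le_div_iff₀ hd hd]
      nlinarith
    have h3 : (|Hf φ μ (φ z) - c| + (φ ρ - φ z) * (μ (Ioi z)).toReal) / (φ ρ + T) =
        |Hf φ μ (φ z) - c| / (φ ρ + T) + ((φ ρ - φ z) * (μ (Ioi z)).toReal) / (φ ρ + T) :=
      add_div _ _ _
    have h4 : ((φ ρ - φ z) * (μ (Ioi z)).toReal) / (φ ρ + T) ≤ (μ (Ioi z)).toReal := by
      rw [div_le_iff₀ hd]
      nlinarith
    rw [hgρ]
    linarith

lemma gS_exists_max (hφc : Continuous φ) (hφm : StrictMono φ) (hφ0 : φ 0 = 0)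
    (hμ : μ univ ≤ 1) {c T : ℝ} (hT : 0 < T) (hc : 0 ≤ c)
    {z₀ : ℝ} (hz₀ : 0 < z₀) (hpos : 0 < gS φ μ c T z₀) :
    ∃ ρ, 0 < ρ ∧ ∀ x, 0 < x → gS φ μ c T x ≤ gS φ μ c T ρ := by
  have hpos' : ∀ y : ℝ, 0 < y → 0 < φ y + T := fun y hy => by
    linarith [phi_pos hφm hφ0 hy]
  have hu₀ : 0 < φ z₀ := phi_pos hφm hφ0 hz₀
  have hΔ₀ : 0 < Hf φ μ (φ z₀) - c := by
    by_contra hx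
    push_neg at hx
    have h0 : gS φ μ c T z₀ ≤ 0 := div_nonpos_of_nonpos_of_nonneg hx (hpos' z₀ hz₀).le
    linarith
  -- small arguments
  have hsmall : ∀ y : ℝ, 0 < y → gS φ μ c T y ≤ φ y / T := by
    intro y hy
    have hyp : 0 < φ y := phi_pos hφm hφ0 hy
    have h1 : Hf φ μ (φ y) - c ≤ φ y := by
      have := Hf_le (μ := μ) hφc hφm hφ0 hμ hyp.le
      linarith
    have h2 : gS φ μ c T y ≤ φ y / (φ y + T) := by
      have hgy : gS φ μ c T y = (Hf φ μ (φ y) - c) / (φ y + T) := rfl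
      rw [hgy, div_le_div_iff₀ (hpos' y hy) (hpos' y hy)]
      nlinarith
    refine h2.trans (div_le_div_of_nonneg_left hyp.le hT (by linarith))
  -- choose δ
  obtain ⟨δ₁, hδ₁pos, hδ₁⟩ : ∃ δ₁ > 0, ∀ x : ℝ, dist x 0 < δ₁ →
      dist (φ x) (φ 0) < T * gS φ μ c T z₀ := by
    exact Metric.continuousAt_iff.mp hφc.continuousAt (T * gS φ μ c T z₀) (by positivity)
  set δ := min (δ₁ / 2) z₀ with hδdef
  have hδpos : 0 < δ := lt_min (by linarith) hz₀
  have hδz₀ : δ ≤ z₀ := min_le_right _ _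
  have hφδ : φ δ < T * gS φ μ c T z₀ := by
    have h := hδ₁ δ (by
      rw [Real.dist_eq, sub_zero, abs_of_pos hδpos]
      calc δ ≤ δ₁ / 2 := min_le_left _ _
        _ < δ₁ := by linarith)
    rw [Real.dist_eq, hφ0, sub_zero] at h
    exact lt_of_le_of_lt (le_abs_self _) h
  -- choose Y
  have hmtend : Tendsto (fun Y : ℝ => (μ (Ioi Y)).toReal) atTop (𝓝 0) := by
    have h1 : Tendsto (fun Y : ℝ => μ (Ioi Y)) atTop (𝓝 (μ (⋂ Y : ℝ, Ioi Y))) :=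
      tendsto_measure_iInter_atTop (fun Y => measurableSet_Ioi.nullMeasurableSet)
        (fun a b hab => Ioi_subset_Ioi hab) ⟨0, measure_ne_top μ _⟩
    have h2 : (⋂ Y : ℝ, Ioi Y) = (∅ : Set ℝ) := by
      ext x
      simp only [mem_iInter, mem_Ioi, mem_empty_iff_false, iff_false, not_forall, not_lt]
      exact ⟨x, le_rfl⟩
    rw [h2, measure_empty] at h1
    have h3 := (ENNReal.tendsto_toReal (a := 0) (by simp)).comp h1
    simpa [Function.comp_def] using h3
  have hev1 : ∀ᶠ Y : ℝ in atTop,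
      (μ (Ioi Y)).toReal < (Hf φ μ (φ z₀) - c) / (T + φ z₀) :=
    hmtend.eventually_lt_const (by positivity)
  obtain ⟨Y, hYm, hYz₀⟩ := (hev1.and (eventually_ge_atTop z₀)).exists
  have hYpos : 0 < Y := lt_of_lt_of_le hz₀ hYz₀
  have hm0 : (0:ℝ) ≤ (μ (Ioi Y)).toReal := ENNReal.toReal_nonneg
  have hmlt : (μ (Ioi Y)).toReal * (T + φ z₀) ≤ Hf φ μ (φ z₀) - c :=
    ((lt_div_iff₀ (by positivity)).mp hYm).le
  -- the (★) inequality
  have hstar : (μ (Ioi Y)).toReal * (φ Y + T) ≤ Hf φ μ (φ Y) - c := by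
    have hIocpos : ∀ v ∈ Ioc (0:ℝ) Y, 0 ≤ φ v := fun v hv => (phi_pos hφm hφ0 hv.1).le
    have hIoipos : ∀ v ∈ Ioi Y, 0 ≤ φ v := fun v hv =>
      (phi_pos hφm hφ0 (hYpos.trans hv)).le
    have hdisj : Disjoint (Ioc (0:ℝ) Y) (Ioi Y) := Ioc_disjoint_Ioi le_rfl
    have hun : Ioc (0:ℝ) Y ∪ Ioi Y = Ioi 0 := Ioc_union_Ioi_eq_Ioi hYpos.le
    have hsplit : ∀ u : ℝ, Hf φ μ u =
        (∫ v in Ioc (0:ℝ) Y, min u (φ v) ∂μ) + ∫ v in Ioi Y, min u (φ v) ∂μ := by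
      intro u
      rw [Hf, ← hun, setIntegral_union hdisj measurableSet_Ioi
        (integrable_min hφc u measurableSet_Ioc hIocpos)
        (integrable_min hφc u measurableSet_Ioi hIoipos)]
    have hconst : (∫ v in Ioi Y, min (φ Y) (φ v) ∂μ) = (μ (Ioi Y)).toReal * φ Y := by
      rw [setIntegral_congr_fun measurableSet_Ioi
        (fun v hv => min_eq_left (hφm (mem_Ioi.mp hv)).le), setIntegral_const, smul_eq_mul, measureReal_def]
    have hmono1 : (∫ v in Ioc (0:ℝ) Y, min (φ z₀) (φ v) ∂μ) ≤
        ∫ v in Ioc (0:ℝ) Y, min (φ Y) (φ v) ∂μ :=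
      setIntegral_mono_on (integrable_min hφc (φ z₀) measurableSet_Ioc hIocpos)
        (integrable_min hφc (φ Y) measurableSet_Ioc hIocpos) measurableSet_Ioc
        (fun v _ => min_le_min (hφm.monotone hYz₀) le_rfl)
    have htail0 : (∫ v in Ioi Y, min (φ z₀) (φ v) ∂μ) ≤ (μ (Ioi Y)).toReal * φ z₀ := by
      have h : (∫ v in Ioi Y, min (φ z₀) (φ v) ∂μ) ≤ ∫ _ in Ioi Y, φ z₀ ∂μ :=
        setIntegral_mono_on (integrable_min hφc (φ z₀) measurableSet_Ioi hIoipos)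
          (integrable_const (φ z₀)) measurableSet_Ioi (fun v _ => min_le_left _ _)
      rwa [setIntegral_const, smul_eq_mul] at h
    have e1 := hsplit (φ Y)
    have e2 := hsplit (φ z₀)
    nlinarith
  have hstar' : (0:ℝ) ≤ Hf φ μ (φ Y) - c :=
    le_trans (mul_nonneg hm0 (hpos' Y hYpos).le) hstar
  -- beyond Y the function is dominated by its value at Y
  have htail : ∀ y : ℝ, Y ≤ y → gS φ μ c T y ≤ gS φ μ c T Y := by
    intro y hy
    have hle : φ Y ≤ φ y := hφm.monotone hy
    have hsetY : {v : ℝ | φ Y < φ v} ∩ Ioi 0 = Ioi Y := by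
      ext v
      simp only [mem_inter_iff, mem_setOf_eq, mem_Ioi]
      constructor
      · rintro ⟨h1, _⟩
        exact hφm.lt_iff_lt.mp h1
      · intro h1
        exact ⟨hφm h1, hYpos.trans h1⟩
    have hkey : Hf φ μ (φ y) ≤ Hf φ μ (φ Y) + (φ y - φ Y) * (μ (Ioi Y)).toReal := by
      have := Hf_lip_ub (μ := μ) hφc hφm hφ0 hle
      rwa [hsetY] at this
    have hgy : gS φ μ c T y = (Hf φ μ (φ y) - c) / (φ y + T) := rfl
    have hgY : gS φ μ c T Y = (Hf φ μ (φ Y) - c) / (φ Y + T) := rfl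
    rw [hgy, hgY, div_le_div_iff₀ (hpos' y (lt_of_lt_of_le hYpos hy)) (hpos' Y hYpos)]
    nlinarith [mul_le_mul_of_nonneg_left hstar (sub_nonneg.mpr hle),
      mul_le_mul_of_nonneg_right hkey (hpos' Y hYpos).le]
  -- extreme value theorem on [δ, Y]
  have hHcont : Continuous (Hf φ μ) := (Hf_lipschitz hφc hφm hφ0 hμ).continuous
  have hfc : ContinuousOn (gS φ μ c T) (Icc δ Y) := by
    apply ContinuousOn.div
    · exact ((hHcont.comp hφc).sub continuous_const).continuousOn
    · exact (hφc.add continuous_const).continuousOn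
    · intro y hy
      exact ne_of_gt (hpos' y (lt_of_lt_of_le hδpos hy.1))
  obtain ⟨ρ, hρmem, hρmax⟩ :=
    isCompact_Icc.exists_isMaxOn ⟨z₀, hδz₀, hYz₀⟩ hfc
  have hρmax' : ∀ x ∈ Icc δ Y, gS φ μ c T x ≤ gS φ μ c T ρ := fun x hx => hρmax hx
  have hz₀mem : z₀ ∈ Icc δ Y := ⟨hδz₀, hYz₀⟩
  refine ⟨ρ, lt_of_lt_of_le hδpos hρmem.1, fun x hx => ?_⟩
  rcases lt_or_ge x δ with hxδ | hxδ
  · have h1 : gS φ μ c T x ≤ φ x / T := hsmall x hx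
    have h2 : φ x ≤ φ δ := hφm.monotone hxδ.le
    have h3 : φ x / T < gS φ μ c T z₀ := by
      rw [div_lt_iff₀ hT]
      nlinarith
    exact le_trans h1 (le_trans h3.le (hρmax' z₀ hz₀mem))
  · rcases le_or_gt x Y with hxY | hxY
    · exact hρmax' x ⟨hxδ, hxY⟩
    · exact le_trans (htail x hxY.le) (hρmax' Y ⟨le_trans hδz₀ hYz₀, le_rfl⟩)

end NuAux


/-- Corollary 1 of the paper: the two-sided bound on `ν₊ + ν₋`. -/
theorem nuPlus_add_nuMinus_two_sided_bound
    (s : ℝ → ℝ) (hs : Continuous s) (hmono : StrictMono s) (hs0 : s 0 = 0)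
    (ν : Measure ℝ) [IsProbabilityMeasure ν] (hν0 : ν {0} = 0) :
    ∀ z : ℝ, 0 < z →
      (1 / s z + 1 / |s (-z)|) * |cY s ν z - cY s ν (-z)|
          + 2 * (ν {y : ℝ | z ≤ |y|}).toReal
        ≥ nuPlus s ν z + nuMinus s ν z ∧
      nuPlus s ν z + nuMinus s ν z
        ≥ |cY s ν z - cY s ν (-z)| / (s z + |s (-z)|) + (ν {y : ℝ | z ≤ |y|}).toReal := by
  intro z hz
  have hSpos : 0 < s z := by rw [← hs0]; exact hmono hz
  have hszneg : s (-z) < 0 := by rw [← hs0]; exact hmono (by linarith)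
  have habsT : |s (-z)| = -s (-z) := abs_of_neg hszneg
  have hTpos : (0:ℝ) < -s (-z) := by linarith
  -- the mirrored data
  set φB : ℝ → ℝ := fun y => -s (-y) with hφBdef
  have hφBc : Continuous φB := (hs.comp continuous_neg).neg
  have hφBm : StrictMono φB := by
    intro a b hab
    show -s (-a) < -s (-b)
    have := hmono (neg_lt_neg hab)
    linarith
  have hφB0 : φB 0 = 0 := by
    show -s (-0) = 0
    rw [neg_zero, hs0, neg_zero]
  set μB : Measure ℝ := ν.map (fun x : ℝ => -x) with hμBdef
  haveI : IsProbabilityMeasure μB := Measure.isProbabilityMeasure_map measurable_neg.aemeasurable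
  have hμA : ν univ ≤ 1 := le_of_eq measure_univ
  have hμB : μB univ ≤ 1 := le_of_eq measure_univ
  -- identification of cY with the Hf functionals
  have hA : ∀ y : ℝ, 0 ≤ y → cY s ν y = NuAux.Hf s ν (s y) := by
    intro y hy
    simp only [cY, NuAux.Hf]
    rw [if_pos hy, integral_Ici_eq_integral_Ioi' hν0]
  have hB : ∀ y : ℝ, 0 < y → cY s ν (-y) = NuAux.Hf φB μB (φB y) := by
    intro y hy
    have hnegy : s (-y) < 0 := by rw [← hs0]; exact hmono (by linarith)
    simp only [cY, NuAux.Hf]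
    rw [if_neg (by linarith)]
    rw [setIntegral_map measurableSet_Ioi
      ((continuous_const.min hφBc).aestronglyMeasurable) measurable_neg.aemeasurable]
    have hpre : (fun x : ℝ => -x) ⁻¹' Ioi 0 = Iio 0 := by
      ext x
      simp [neg_pos]
    rw [hpre]
    refine setIntegral_congr_fun measurableSet_Iio (fun w hw => ?_)
    have hsw : s w < 0 := by rw [← hs0]; exact hmono hw
    have h1 : |s (-y)| = φB y := abs_of_neg hnegy
    have h2 : φB (-w) = -s w := by
      show -s (-(-w)) = -s w
      rw [neg_neg]
    rw [h1, h2, abs_of_neg hsw]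
  have hcA0 : 0 ≤ cY s ν z := by
    rw [hA z hz.le]
    exact NuAux.Hf_nonneg hmono hs0 hSpos.le
  have hcB0 : 0 ≤ cY s ν (-z) := by
    rw [hB z hz]
    exact NuAux.Hf_nonneg hφBm hφB0 (le_of_lt (NuAux.phi_pos hφBm hφB0 hz))
  -- slope identifications
  have hslm : ∀ y : ℝ, 0 < y →
      slopeYMinus s ν z y = NuAux.gS s ν (cY s ν (-z)) (-s (-z)) y := by
    intro y hy
    show (cY s ν y - cY s ν (-z)) / (s y - s (-z)) =
      (NuAux.Hf s ν (s y) - cY s ν (-z)) / (s y + -s (-z))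
    rw [hA y hy.le]
    congr 1
  have hslp : ∀ y : ℝ, 0 < y →
      slopeYPlus s ν z y = -(NuAux.gS φB μB (cY s ν z) (s z) y) := by
    intro y hy
    show (cY s ν z - cY s ν (-y)) / (s z - s (-y)) =
      -((NuAux.Hf φB μB (φB y) - cY s ν z) / (φB y + s z))
    rw [← hB y hy, ← neg_div, neg_sub]
    congr 1
    show s z - s (-y) = -s (-y) + s z
    ring
  -- value of the mirrored slope at z
  have hgBz : NuAux.gS φB μB (cY s ν z) (s z) z =
      (cY s ν (-z) - cY s ν z) / (s z + -s (-z)) := by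
    show (NuAux.Hf φB μB (φB z) - cY s ν z) / (φB z + s z) = _
    rw [← hB z hz]
    congr 1
    show -s (-z) + s z = s z + -s (-z)
    ring
  have hμBIoi : μB (Ioi z) = ν (Iio (-z)) := by
    rw [hμBdef, Measure.map_apply measurable_neg measurableSet_Ioi]
    congr 1
    ext x
    simp only [mem_preimage, mem_Ioi, mem_Iio]
    constructor <;> intro h <;> linarith
  -- the three facts about ζ₋
  have hZm : 0 ≤ zetaMinus s ν z ∧
      zetaMinus s ν z ≤ (ν (Ici z)).toReal + |cY s ν z - cY s ν (-z)| / (-s (-z)) ∧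
      ((0:ℝ) < cY s ν z - cY s ν (-z) →
        (cY s ν z - cY s ν (-z)) / (s z + -s (-z)) ≤ zetaMinus s ν z) := by
    by_cases hne : (argYMinus s ν z).Nonempty
    · have hne' := hne
      obtain ⟨ρ, hρmem⟩ := hne'
      have hρ1 : 0 < ρ := hρmem.1
      have hρ2 : ∀ x, 0 < x → slopeYMinus s ν z x ≤ slopeYMinus s ν z ρ := hρmem.2
      have hgmax : ∀ x, 0 < x → NuAux.gS s ν (cY s ν (-z)) (-s (-z)) x ≤
          NuAux.gS s ν (cY s ν (-z)) (-s (-z)) ρ := by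
        intro x hx
        rw [← hslm x hx, ← hslm ρ hρ1]
        exact hρ2 x hx
      have hbdd : ∀ b ∈ slopeYMinus s ν z '' Ioi 0, b ≤ slopeYMinus s ν z ρ := by
        rintro b ⟨x, hx, rfl⟩
        exact hρ2 x hx
      have hzeq : zetaMinus s ν z = slopeYMinus s ν z ρ := by
        simp only [zetaMinus]
        rw [if_pos hne]
        exact le_antisymm (csSup_le ⟨_, mem_image_of_mem _ (mem_Ioi.mpr hρ1)⟩ hbdd)
          (le_csSup ⟨_, fun b hb => hbdd b hb⟩ (mem_image_of_mem _ (mem_Ioi.mpr hρ1)))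
      refine ⟨?_, ?_, ?_⟩
      · rw [hzeq, hslm ρ hρ1]
        exact NuAux.gS_max_nonneg hs hmono hs0 hTpos hρ1 hgmax
      · rw [hzeq, hslm ρ hρ1]
        have hle := NuAux.gS_max_le hs hmono hs0 hTpos hz hρ1 hgmax
        rw [← hA z hz.le] at hle
        have hmle : (ν (Ioi z)).toReal ≤ (ν (Ici z)).toReal :=
          ENNReal.toReal_mono (measure_ne_top _ _) (measure_mono Ioi_subset_Ici_self)
        linarith
      · intro _
        have h1 := hρ2 z hz
        have h2 : slopeYMinus s ν z z =
            (cY s ν z - cY s ν (-z)) / (s z - s (-z)) := rfl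
        have h3 : s z - s (-z) = s z + -s (-z) := by ring
        rw [hzeq]
        rw [h2, h3] at h1
        exact h1
    · have hzeq : zetaMinus s ν z = 0 := by
        simp only [zetaMinus]
        rw [if_neg hne]
      refine ⟨le_of_eq hzeq.symm, ?_, ?_⟩
      · rw [hzeq]
        exact add_nonneg ENNReal.toReal_nonneg (div_nonneg (abs_nonneg _) hTpos.le)
      · intro hΔ
        exfalso
        have hgz : 0 < NuAux.gS s ν (cY s ν (-z)) (-s (-z)) z := by
          show 0 < (NuAux.Hf s ν (s z) - cY s ν (-z)) / (s z + -s (-z))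
          rw [← hA z hz.le]
          exact div_pos (by linarith) (by linarith)
        obtain ⟨ρ, hρ1, hρ2⟩ :=
          NuAux.gS_exists_max hs hmono hs0 hμA hTpos hcB0 hz hgz
        refine hne ⟨ρ, hρ1, fun x hx => ?_⟩
        rw [hslm x hx, hslm ρ hρ1]
        exact hρ2 x hx
  -- the three facts about ζ₊
  have hZp : 0 ≤ zetaPlus s ν z ∧
      zetaPlus s ν z ≤ (ν (Iic (-z))).toReal + |cY s ν z - cY s ν (-z)| / s z ∧
      (cY s ν z - cY s ν (-z) < 0 →
        (cY s ν (-z) - cY s ν z) / (s z + -s (-z)) ≤ zetaPlus s ν z) := by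
    by_cases hne : (argYPlus s ν z).Nonempty
    · have hne' := hne
      obtain ⟨ρ, hρmem⟩ := hne'
      have hρ1 : 0 < ρ := hρmem.1
      have hρ2 : ∀ x, 0 < x → slopeYPlus s ν z ρ ≤ slopeYPlus s ν z x := hρmem.2
      have hgmax : ∀ x, 0 < x → NuAux.gS φB μB (cY s ν z) (s z) x ≤
          NuAux.gS φB μB (cY s ν z) (s z) ρ := by
        intro x hx
        have h := hρ2 x hx
        rw [hslp x hx, hslp ρ hρ1] at h
        linarith
      have hbdd : ∀ b ∈ slopeYPlus s ν z '' Ioi 0, slopeYPlus s ν z ρ ≤ b := by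
        rintro b ⟨x, hx, rfl⟩
        exact hρ2 x hx
      have hzeq : zetaPlus s ν z = NuAux.gS φB μB (cY s ν z) (s z) ρ := by
        simp only [zetaPlus]
        rw [if_pos hne]
        have hinf : sInf (slopeYPlus s ν z '' Ioi 0) = slopeYPlus s ν z ρ :=
          le_antisymm
            (csInf_le ⟨_, fun b hb => hbdd b hb⟩ (mem_image_of_mem _ (mem_Ioi.mpr hρ1)))
            (le_csInf ⟨_, mem_image_of_mem _ (mem_Ioi.mpr hρ1)⟩ hbdd)
        rw [hinf, hslp ρ hρ1, neg_neg]
      refine ⟨?_, ?_, ?_⟩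
      · rw [hzeq]
        exact NuAux.gS_max_nonneg hφBc hφBm hφB0 hSpos hρ1 hgmax
      · rw [hzeq]
        have hle := NuAux.gS_max_le hφBc hφBm hφB0 hSpos hz hρ1 hgmax
        rw [← hB z hz, hμBIoi] at hle
        have hmle : (ν (Iio (-z))).toReal ≤ (ν (Iic (-z))).toReal :=
          ENNReal.toReal_mono (measure_ne_top _ _) (measure_mono Iio_subset_Iic_self)
        rw [abs_sub_comm] at hle
        linarith
      · intro _
        have h1 := hgmax z hz
        rw [hgBz] at h1
        rw [hzeq]
        exact h1
    · have hzeq : zetaPlus s ν z = 0 := by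
        simp only [zetaPlus]
        rw [if_neg hne]
      refine ⟨le_of_eq hzeq.symm, ?_, ?_⟩
      · rw [hzeq]
        exact add_nonneg ENNReal.toReal_nonneg (div_nonneg (abs_nonneg _) hSpos.le)
      · intro hΔ
        exfalso
        have hgz : 0 < NuAux.gS φB μB (cY s ν z) (s z) z := by
          rw [hgBz]
          exact div_pos (by linarith) (by linarith)
        obtain ⟨ρ, hρ1, hρ2⟩ :=
          NuAux.gS_exists_max hφBc hφBm hφB0 hμB hSpos hcA0 hz hgz
        refine hne ⟨ρ, hρ1, fun x hx => ?_⟩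
        rw [hslp x hx, hslp ρ hρ1]
        have := hρ2 x hx
        linarith
  obtain ⟨hZm1, hZm2, hZm3⟩ := hZm
  obtain ⟨hZp1, hZp2, hZp3⟩ := hZp
  -- the tail measure identity
  have hRiden : (ν {y : ℝ | z ≤ |y|}).toReal =
      (ν (Iic (-z))).toReal + (ν (Ici z)).toReal := by
    have hset : {y : ℝ | z ≤ |y|} = Iic (-z) ∪ Ici z := by
      ext y
      simp only [mem_setOf_eq, mem_union, mem_Iic, mem_Ici, le_abs]
      constructor
      · rintro (h | h)
        · exact Or.inr h
        · exact Or.inl (by linarith)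
      · rintro (h | h)
        · exact Or.inr (by linarith)
        · exact Or.inl h
    rw [hset, measure_union (Iic_disjoint_Ici.mpr (not_le.mpr (by linarith))) measurableSet_Ici,
      ENNReal.toReal_add (measure_ne_top _ _) (measure_ne_top _ _)]
  have hP0 : (0:ℝ) ≤ (ν (Ici z)).toReal := ENNReal.toReal_nonneg
  have hQ0 : (0:ℝ) ≤ (ν (Iic (-z))).toReal := ENNReal.toReal_nonneg
  constructor
  · -- upper bound
    simp only [nuPlus, nuMinus]
    rw [habsT, hRiden]
    have hring : (1 / s z + 1 / -s (-z)) * |cY s ν z - cY s ν (-z)| =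
        |cY s ν z - cY s ν (-z)| / s z + |cY s ν z - cY s ν (-z)| / -s (-z) := by
      field_simp
    rw [ge_iff_le, hring]
    linarith
  · -- lower bound
    simp only [nuPlus, nuMinus]
    rw [habsT, hRiden, ge_iff_le]
    rcases lt_trichotomy (cY s ν z - cY s ν (-z)) 0 with hΔ | hΔ | hΔ
    · rw [abs_of_neg hΔ]
      have h1 := hZp3 hΔ
      have h2 : -(cY s ν z - cY s ν (-z)) / (s z + -s (-z)) =
          (cY s ν (-z) - cY s ν z) / (s z + -s (-z)) := by ring
      rw [h2]
      linarith
    · rw [hΔ, abs_zero, zero_div]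
      linarith
    · rw [abs_of_pos hΔ]
      have h1 := hZm3 hΔ
      linarith
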